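/- Let β̂ be a minimizer over 𝓑(R) of the extended-real-valued function β ↦ ℓ_n(β) + bina(β), i.e. ℓ_n(β̂) + bina(β̂) ≤ ℓ_n(γ) + bina(γ) for all γ ∈ 𝓑(R). Let β ∈ 𝓑(R) satisfy n_{j,•}ᵀ β_{j,•} = 0 for all j = 1,…,p, and let h = (h_{1,•},…,h_{p,•}) ∈ ℝ^N be such that for each j, h_{j,•} is a subgradient at β_{j,•} of the convex function u ↦ Σ_{l=2}^{d_j+1} ω_{j,l} |u_l − u_{l−1}| on ℝ^{d_j+1}. Then ℓ_n is differentiable at β̂ and (β̂ − β)ᵀ ∇ℓ_n(β̂) ≤ −(β̂ − β)ᵀ h. -/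

import Mathlib

noncomputable section

/-- Inner product of two block vectors `β, x ∈ ℝ^N`, `N = Σⱼ (dⱼ + 1)`. -/
def innerB {p : ℕ} {d : Fin p → ℕ} (β x : (j : Fin p) → Fin (d j + 1) → ℝ) : ℝ :=
  ∑ j, ∑ l, β j l * x j l

/-- `S⁰(f,t) = Σᵢ Yᵢ(t) e^{fᵢ}` with `Yᵢ(t) = 1(zᵢ ≥ t)`. -/
def S0 {n : ℕ} (z f : Fin n → ℝ) (t : ℝ) : ℝ :=
  ∑ i, if t ≤ z i then Real.exp (f i) else 0

/-- The empirical partial negative log-likelihood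
`ℓₙ(β) = −(1/n) Σ_{i : δᵢ = 1, zᵢ ≤ τ} [βᵀxᵢ − log S⁰(Xβ, zᵢ)]`. -/
def ellN {n p : ℕ} {d : Fin p → ℕ} (τ : ℝ)
    (x : Fin n → (j : Fin p) → Fin (d j + 1) → ℝ)
    (z : Fin n → ℝ) (δ : Fin n → Bool)
    (β : (j : Fin p) → Fin (d j + 1) → ℝ) : ℝ :=
  -(1 / (n : ℝ)) * ∑ i, if δ i = true ∧ z i ≤ τ then
      innerB β (x i) - Real.log (S0 z (fun i' => innerB β (x i')) (z i))
    else 0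

/-- The binarsity penalty, valued in the extended reals. -/
def binaE {p : ℕ} {d : Fin p → ℕ} (ω : (j : Fin p) → Fin (d j) → ℝ)
    (nv : (j : Fin p) → Fin (d j + 1) → ℝ)
    (β : (j : Fin p) → Fin (d j + 1) → ℝ) : EReal :=
  ∑ j, (((∑ l : Fin (d j), ω j l * |β j l.succ - β j l.castSucc| : ℝ) : EReal)
    + if (∑ l, nv j l * β j l) = 0 then (0 : EReal) else ⊤)

/-- Membership in the ball `𝓑(R) = {β : Σⱼ maxₗ |β_{j,l}| ≤ R}`. -/
def inB {p : ℕ} {d : Fin p → ℕ} (R : ℝ)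
    (β : (j : Fin p) → Fin (d j + 1) → ℝ) : Prop :=
  ∑ j, Finset.univ.sup' Finset.univ_nonempty (fun l => |β j l|) ≤ R

end

section aux

open Real Filter Set Topology

/-- Coercion of a finite real sum into `EReal`. -/
lemma erealCoeSum {ι : Type*} (s : Finset ι) (f : ι → ℝ) :
    ((∑ i ∈ s, f i : ℝ) : EReal) = ∑ i ∈ s, ((f i : ℝ) : EReal) := by
  classical
  induction s using Finset.induction_on with
  | empty => simp
  | @insert a s h ih =>
    rw [Finset.sum_insert h, Finset.sum_insert h, EReal.coe_add, ih]

/-- `ellN` is (globally) differentiable. -/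
lemma ellN_diff {n p : ℕ} {d : Fin p → ℕ} (τ : ℝ)
    (x : Fin n → (j : Fin p) → Fin (d j + 1) → ℝ)
    (z : Fin n → ℝ) (δ : Fin n → Bool) :
    Differentiable ℝ (ellN τ x z δ) := by
  have hlin : ∀ v : (j : Fin p) → Fin (d j + 1) → ℝ,
      Differentiable ℝ (fun β : (j : Fin p) → Fin (d j + 1) → ℝ => innerB β v) := by
    intro v
    unfold innerB
    exact Differentiable.fun_sum fun j _ => Differentiable.fun_sum fun l _ =>
      (by fun_prop : Differentiable ℝ fun β : ((j : Fin p) → Fin (d j + 1) → ℝ) => β j l).mul_const _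
  have hS0diff : ∀ t : ℝ, Differentiable ℝ
      (fun β : (j : Fin p) → Fin (d j + 1) → ℝ =>
        S0 z (fun i' => innerB β (x i')) t) := by
    intro t
    unfold S0
    refine Differentiable.fun_sum fun i _ => ?_
    by_cases hc : t ≤ z i
    · simp only [if_pos hc]
      exact (hlin (x i)).exp
    · simp only [if_neg hc]
      exact differentiable_const 0
  have hS0pos : ∀ (β : (j : Fin p) → Fin (d j + 1) → ℝ) (i : Fin n),
      0 < S0 z (fun i' => innerB β (x i')) (z i) := by
    intro β i
    unfold S0
    refine Finset.sum_pos' (fun i' _ => ?_) ⟨i, Finset.mem_univ i, ?_⟩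
    · split
      · exact (Real.exp_pos _).le
      · exact le_rfl
    · rw [if_pos le_rfl]
      exact Real.exp_pos _
  unfold ellN
  refine Differentiable.const_mul (Differentiable.fun_sum fun i _ => ?_) _
  by_cases hc : δ i = true ∧ z i ≤ τ
  · simp only [if_pos hc]
    exact (hlin (x i)).sub ((hS0diff (z i)).log fun β => (hS0pos β i).ne')
  · simp only [if_neg hc]
    exact differentiable_const 0

end aux

open Real Filter Set Topology

/-- KKT/monotonicity: if `β̂` minimizes `ℓₙ + bina` over `𝓑(R)`,
`β ∈ 𝓑(R)` satisfies the linear constraints, and `h` is a blockwise subgradient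
of the weighted TV penalty at `β`, then `ℓₙ` is differentiable at `β̂` and
`(β̂ − β)ᵀ ∇ℓₙ(β̂) ≤ −(β̂ − β)ᵀ h`. -/
theorem kkt_monotonicity {n p : ℕ} {d : Fin p → ℕ}
    (hn : 1 ≤ n) (hp : 1 ≤ p) (hd : ∀ j, 1 ≤ d j)
    (ω : (j : Fin p) → Fin (d j) → ℝ) (hω : ∀ j l, 0 < ω j l)
    (nv : (j : Fin p) → Fin (d j + 1) → ℝ)
    (R τ : ℝ) (hR : 0 < R) (hτ : 0 < τ)
    (x : Fin n → (j : Fin p) → Fin (d j + 1) → ℝ)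
    (z : Fin n → ℝ) (hz : ∀ i, 0 ≤ z i) (δ : Fin n → Bool)
    (βh : (j : Fin p) → Fin (d j + 1) → ℝ) (hβhB : inB R βh)
    (hmin : ∀ γ, inB R γ →
      ((ellN τ x z δ βh : ℝ) : EReal) + binaE ω nv βh ≤
        ((ellN τ x z δ γ : ℝ) : EReal) + binaE ω nv γ)
    (β : (j : Fin p) → Fin (d j + 1) → ℝ) (hβB : inB R β)
    (hβc : ∀ j, ∑ l, nv j l * β j l = 0)
    (h : (j : Fin p) → Fin (d j + 1) → ℝ)
    (hsub : ∀ j, ∀ v : Fin (d j + 1) → ℝ,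
      (∑ l : Fin (d j), ω j l * |β j l.succ - β j l.castSucc|) +
          ∑ l, h j l * (v l - β j l) ≤
        ∑ l : Fin (d j), ω j l * |v l.succ - v l.castSucc|) :
    DifferentiableAt ℝ (ellN τ x z δ) βh ∧
      fderiv ℝ (ellN τ x z δ) βh (βh - β) ≤
        -∑ j, ∑ l, (βh j l - β j l) * h j l := by
  classical
  have hdiff := ellN_diff τ x z δ
  refine ⟨hdiff.differentiableAt, ?_⟩
  -- notation
  set TV : ((j : Fin p) → Fin (d j + 1) → ℝ) → ℝ :=
    fun u => ∑ j, ∑ l : Fin (d j), ω j l * |u j l.succ - u j l.castSucc| with hTVdef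
  set C : ℝ := -∑ j, ∑ l, (βh j l - β j l) * h j l with hCdef
  -- binaE under the linear constraints
  have hbina : ∀ u : (j : Fin p) → Fin (d j + 1) → ℝ,
      (∀ j, ∑ l, nv j l * u j l = 0) → binaE ω nv u = ((TV u : ℝ) : EReal) := by
    intro u hu
    unfold binaE
    simp only [if_pos (hu _), add_zero]
    rw [hTVdef]
    rw [erealCoeSum]
  -- βh satisfies the linear constraints
  have hfin : ∀ j, ∑ l, nv j l * βh j l = 0 := by
    by_contra hcon
    push_neg at hcon
    obtain ⟨j0, hj0⟩ := hcon
    have hbtop : binaE ω nv βh = ⊤ := by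
      have hge : ((∑ l : Fin (d j0), ω j0 l * |βh j0 l.succ - βh j0 l.castSucc| : ℝ) : EReal)
          + (if (∑ l, nv j0 l * βh j0 l) = 0 then (0 : EReal) else ⊤) ≤ binaE ω nv βh := by
        unfold binaE
        refine Finset.single_le_sum (f := fun j =>
          ((∑ l : Fin (d j), ω j l * |βh j l.succ - βh j l.castSucc| : ℝ) : EReal)
          + if (∑ l, nv j l * βh j l) = 0 then (0 : EReal) else ⊤)
          (fun j _ => ?_) (Finset.mem_univ j0)
        have h1 : (0 : EReal) ≤
            ((∑ l : Fin (d j), ω j l * |βh j l.succ - βh j l.castSucc| : ℝ) : EReal) := by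
          exact_mod_cast Finset.sum_nonneg fun l _ => mul_nonneg (hω j l).le (abs_nonneg _)
        have h2 : (0 : EReal) ≤ (if (∑ l, nv j l * βh j l) = 0 then (0 : EReal) else ⊤) := by
          split
          · exact le_rfl
          · exact le_top
        simpa using add_le_add h1 h2
      rw [if_neg hj0, EReal.coe_add_top] at hge
      exact top_le_iff.mp hge
    have hmβ := hmin β hβB
    rw [hbtop, hbina β hβc, EReal.coe_add_top, ← EReal.coe_add] at hmβ
    exact EReal.coe_ne_top _ (top_le_iff.mp hmβ)
  -- the segment
  set γ : ℝ → ((j : Fin p) → Fin (d j + 1) → ℝ) := fun t => βh + t • (β - βh) with hγdef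
  have hγ0 : γ 0 = βh := by simp [hγdef]
  have hγapp : ∀ (t : ℝ) (j : Fin p) (l : Fin (d j + 1)),
      γ t j l = (1 - t) * βh j l + t * β j l := by
    intro t j l
    simp only [hγdef, Pi.add_apply, Pi.smul_apply, Pi.sub_apply, smul_eq_mul]
    ring
  -- γ t stays in the ball for t ∈ [0,1]
  have hγB : ∀ t ∈ Icc (0 : ℝ) 1, inB R (γ t) := by
    intro t ht
    have ht0 : (0 : ℝ) ≤ t := ht.1
    have ht1 : (0 : ℝ) ≤ 1 - t := by linarith [ht.2]
    unfold inB
    have hstep : ∀ j : Fin p,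
        (Finset.univ.sup' Finset.univ_nonempty (fun l => |γ t j l|)) ≤
          (1 - t) * Finset.univ.sup' Finset.univ_nonempty (fun l => |βh j l|)
          + t * Finset.univ.sup' Finset.univ_nonempty (fun l => |β j l|) := by
      intro j
      refine Finset.sup'_le _ _ fun l _ => ?_
      have h1 : |βh j l| ≤ Finset.univ.sup' Finset.univ_nonempty (fun l => |βh j l|) :=
        Finset.le_sup' (fun l => |βh j l|) (Finset.mem_univ l)
      have h2 : |β j l| ≤ Finset.univ.sup' Finset.univ_nonempty (fun l => |β j l|) :=
        Finset.le_sup' (fun l => |β j l|) (Finset.mem_univ l)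
      calc |γ t j l| = |(1 - t) * βh j l + t * β j l| := by rw [hγapp]
        _ ≤ |(1 - t) * βh j l| + |t * β j l| := abs_add_le _ _
        _ = (1 - t) * |βh j l| + t * |β j l| := by
            rw [abs_mul, abs_mul, abs_of_nonneg ht1, abs_of_nonneg ht0]
        _ ≤ (1 - t) * Finset.univ.sup' Finset.univ_nonempty (fun l => |βh j l|)
            + t * Finset.univ.sup' Finset.univ_nonempty (fun l => |β j l|) := by
            have := mul_le_mul_of_nonneg_left h1 ht1
            have := mul_le_mul_of_nonneg_left h2 ht0
            linarith
    calc (∑ j, Finset.univ.sup' Finset.univ_nonempty (fun l => |γ t j l|))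
        ≤ ∑ j, ((1 - t) * Finset.univ.sup' Finset.univ_nonempty (fun l => |βh j l|)
            + t * Finset.univ.sup' Finset.univ_nonempty (fun l => |β j l|)) :=
          Finset.sum_le_sum fun j _ => hstep j
      _ = (1 - t) * (∑ j, Finset.univ.sup' Finset.univ_nonempty (fun l => |βh j l|))
          + t * (∑ j, Finset.univ.sup' Finset.univ_nonempty (fun l => |β j l|)) := by
          rw [Finset.sum_add_distrib, Finset.mul_sum, Finset.mul_sum]
      _ ≤ (1 - t) * R + t * R := by
          have hA := hβhB
          have hB := hβB
          unfold inB at hA hB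
          have := mul_le_mul_of_nonneg_left hA ht1
          have := mul_le_mul_of_nonneg_left hB ht0
          linarith
      _ = R := by ring
  -- γ t satisfies the linear constraints
  have hγc : ∀ (t : ℝ) (j : Fin p), ∑ l, nv j l * γ t j l = 0 := by
    intro t j
    have : ∑ l, nv j l * γ t j l
        = (1 - t) * ∑ l, nv j l * βh j l + t * ∑ l, nv j l * β j l := by
      rw [Finset.mul_sum, Finset.mul_sum, ← Finset.sum_add_distrib]
      refine Finset.sum_congr rfl fun l _ => ?_
      rw [hγapp]
      ring
    rw [this, hfin j, hβc j]
    ring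
  -- TV convexity along the segment
  have hTVγ : ∀ t ∈ Icc (0 : ℝ) 1, TV (γ t) ≤ (1 - t) * TV βh + t * TV β := by
    intro t ht
    have ht0 : (0 : ℝ) ≤ t := ht.1
    have ht1 : (0 : ℝ) ≤ 1 - t := by linarith [ht.2]
    have hterm : ∀ (j : Fin p) (l : Fin (d j)),
        ω j l * |γ t j l.succ - γ t j l.castSucc| ≤
          (1 - t) * (ω j l * |βh j l.succ - βh j l.castSucc|)
          + t * (ω j l * |β j l.succ - β j l.castSucc|) := by
      intro j l
      have habs : |γ t j l.succ - γ t j l.castSucc| ≤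
          (1 - t) * |βh j l.succ - βh j l.castSucc| + t * |β j l.succ - β j l.castSucc| := by
        calc |γ t j l.succ - γ t j l.castSucc|
            = |(1 - t) * (βh j l.succ - βh j l.castSucc) + t * (β j l.succ - β j l.castSucc)| := by
              rw [hγapp, hγapp]; ring_nf
          _ ≤ |(1 - t) * (βh j l.succ - βh j l.castSucc)| + |t * (β j l.succ - β j l.castSucc)| :=
              abs_add_le _ _
          _ = (1 - t) * |βh j l.succ - βh j l.castSucc| + t * |β j l.succ - β j l.castSucc| := by
              rw [abs_mul, abs_mul, abs_of_nonneg ht1, abs_of_nonneg ht0]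
      calc ω j l * |γ t j l.succ - γ t j l.castSucc|
          ≤ ω j l * ((1 - t) * |βh j l.succ - βh j l.castSucc|
              + t * |β j l.succ - β j l.castSucc|) :=
            mul_le_mul_of_nonneg_left habs (hω j l).le
        _ = (1 - t) * (ω j l * |βh j l.succ - βh j l.castSucc|)
            + t * (ω j l * |β j l.succ - β j l.castSucc|) := by ring
    calc TV (γ t) ≤ ∑ j, ∑ l : Fin (d j),
          ((1 - t) * (ω j l * |βh j l.succ - βh j l.castSucc|)
            + t * (ω j l * |β j l.succ - β j l.castSucc|)) := by
          rw [hTVdef]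
          exact Finset.sum_le_sum fun j _ => Finset.sum_le_sum fun l _ => hterm j l
      _ = (1 - t) * TV βh + t * TV β := by
          rw [hTVdef]
          simp only [Finset.sum_add_distrib, Finset.mul_sum]
  -- subgradient inequality: TV β - TV βh ≤ C
  have hsubsum : TV β - TV βh ≤ C := by
    have hs : ∀ j : Fin p,
        (∑ l : Fin (d j), ω j l * |β j l.succ - β j l.castSucc|) +
          ∑ l, h j l * (βh j l - β j l) ≤
        ∑ l : Fin (d j), ω j l * |βh j l.succ - βh j l.castSucc| := fun j => hsub j (βh j)
    have hsum := Finset.sum_le_sum (fun j (_ : j ∈ Finset.univ) => hs j)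
    rw [Finset.sum_add_distrib] at hsum
    have hC : C = -∑ j, ∑ l, h j l * (βh j l - β j l) := by
      rw [hCdef]
      congr 1
      exact Finset.sum_congr rfl fun j _ => Finset.sum_congr rfl fun l _ => mul_comm _ _
    rw [hTVdef, hC]
    linarith
  -- the key difference-quotient inequality
  have hkey : ∀ t ∈ Ioc (0 : ℝ) 1,
      ellN τ x z δ βh - ellN τ x z δ (γ t) ≤ t * C := by
    intro t ht
    have htIcc : t ∈ Icc (0 : ℝ) 1 := ⟨ht.1.le, ht.2⟩
    have hm := hmin (γ t) (hγB t htIcc)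
    rw [hbina βh hfin, hbina (γ t) (hγc t), ← EReal.coe_add, ← EReal.coe_add,
      EReal.coe_le_coe_iff] at hm
    have h2 := hTVγ t htIcc
    have h3 : t * (TV β - TV βh) ≤ t * C := mul_le_mul_of_nonneg_left hsubsum ht.1.le
    nlinarith
  -- derivative of t ↦ ellN (γ t) at 0
  have hγd : HasDerivAt γ (β - βh) 0 := by
    have h1 : HasDerivAt (fun t : ℝ => t • (β - βh)) ((1 : ℝ) • (β - βh)) 0 :=
      (hasDerivAt_id (0 : ℝ)).smul_const (β - βh)
    rw [one_smul] at h1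
    exact h1.const_add βh
  have hF : HasDerivAt (fun t => ellN τ x z δ (γ t))
      (fderiv ℝ (ellN τ x z δ) βh (β - βh)) 0 := by
    have hl : HasFDerivAt (ellN τ x z δ) (fderiv ℝ (ellN τ x z δ) βh) (γ 0) := by
      rw [hγ0]
      exact (hdiff βh).hasFDerivAt
    exact hl.comp_hasDerivAt 0 hγd
  set D : ℝ := fderiv ℝ (ellN τ x z δ) βh (β - βh) with hDdef
  have hslope : Tendsto (slope (fun t => ellN τ x z δ (γ t)) 0) (𝓝[>] (0 : ℝ)) (𝓝 D) := by
    refine (hasDerivAt_iff_tendsto_slope.mp hF).mono_left (nhdsWithin_mono 0 ?_)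
    intro t ht
    exact Set.mem_compl_singleton_iff.mpr (ne_of_gt ht)
  have hCle : -C ≤ D := by
    refine ge_of_tendsto hslope ?_
    filter_upwards [Ioc_mem_nhdsGT_of_mem (left_mem_Ico.mpr one_pos)] with t ht
    have ht0 : 0 < t := ht.1
    have hk := hkey t ht
    rw [slope_def_field]
    rw [hγ0]
    rw [sub_zero, le_div_iff₀ ht0]
    nlinarith
  have hneg : βh - β = -(β - βh) := (neg_sub β βh).symm
  rw [hneg, map_neg]
  -- goal is -D ≤ C
  linarith
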